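/- Let N : ℕ, f : ℝ → ℂ, and ρ : Fin N → ℂ with ρ ≠ 0. Then P_f(ρ) = 0 if and only if f(ξ(ρ)) = 0 or ξ(ρ) = 1. (Toy-model form of Proposition 1, item (kerP): the zero-locus of the projection away from the origin consists exactly of the zeros of f and of the vectors with ξ = 1, i.e. those satisfying ρ = ζ(ρ)·ρ̄.) -/

import Mathlib

noncomputable section

open scoped BigOperators

namespace PureSpinorToy

variable {N : ℕ}

/-- Complex bilinear pairing `B(ρ,σ) = ∑ I, ρ_I σ_I`. -/
def B (ρ σ : Fin N → ℂ) : ℂ := ∑ I, ρ I * σ I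

/-- Hermitian inner product `⟪ρ,σ⟫ = ∑ I, conj(ρ_I) σ_I`. -/
def hInner (ρ σ : Fin N → ℂ) : ℂ := ∑ I, (starRingEnd ℂ) (ρ I) * σ I

/-- Norm square `‖ρ‖² = ⟪ρ,ρ⟫` (a nonnegative real). -/
def nsq (ρ : Fin N → ℂ) : ℝ := (hInner ρ ρ).re

/-- Componentwise complex conjugation `ρ̄`. -/
def conjFun (ρ : Fin N → ℂ) : Fin N → ℂ := fun I => (starRingEnd ℂ) (ρ I)

/-- `ζ(ρ) = B(ρ,ρ)/‖ρ‖²`. -/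
def zeta (ρ : Fin N → ℂ) : ℂ := B ρ ρ / (nsq ρ : ℂ)

/-- `ξ(ρ) = |ζ(ρ)|²`. -/
def xi (ρ : Fin N → ℂ) : ℝ := Complex.normSq (zeta ρ)

/-- The family of projection maps
`P_f(ρ) = f(ξ(ρ)) • (ρ − (ζ(ρ)/(1+√(1−ξ(ρ)))) • ρ̄)`. -/
def P (f : ℝ → ℂ) (ρ : Fin N → ℂ) : Fin N → ℂ :=
  f (xi ρ) • (ρ - (zeta ρ / (1 + (Real.sqrt (1 - xi ρ) : ℂ))) • conjFun ρ)

/-- The special function `h(t) = (1+√(1−t))/(2√(1−t))`. -/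
def h (t : ℝ) : ℂ := (((1 + Real.sqrt (1 - t)) / (2 * Real.sqrt (1 - t)) : ℝ) : ℂ)

/-- The potential `Φ(ρ) = (‖ρ‖²/2)(1+√(1−ξ(ρ)))`. -/
def Phi (ρ : Fin N → ℂ) : ℝ := (nsq ρ / 2) * (1 + Real.sqrt (1 - xi ρ))

lemma hInner_self (ρ : Fin N → ℂ) : hInner ρ ρ = ((∑ I, Complex.normSq (ρ I) : ℝ) : ℂ) := by
  push_cast
  exact Finset.sum_congr rfl fun i _ => (Complex.normSq_eq_conj_mul_self).symm

lemma nsq_eq (ρ : Fin N → ℂ) : nsq ρ = ∑ I, Complex.normSq (ρ I) := by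
  simp [nsq, hInner_self]

lemma hInner_self_eq (ρ : Fin N → ℂ) : hInner ρ ρ = ((nsq ρ : ℝ) : ℂ) := by
  rw [hInner_self, nsq_eq]

lemma nsq_pos (ρ : Fin N → ℂ) (hρ : ρ ≠ 0) : 0 < nsq ρ := by
  rw [nsq_eq]
  rcases Function.ne_iff.mp hρ with ⟨I, hI⟩
  have : 0 < Complex.normSq (ρ I) := Complex.normSq_pos.mpr hI
  exact lt_of_lt_of_le this (Finset.single_le_sum (fun i _ => Complex.normSq_nonneg _) (Finset.mem_univ I))

lemma eq_zero_of_hInner (ρ : Fin N → ℂ) (h : hInner ρ ρ = 0) : ρ = 0 := by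
  by_contra hρ
  have := nsq_pos ρ hρ
  rw [hInner_self_eq] at h
  simp only [Complex.ofReal_eq_zero] at h
  linarith [this, h ▸ this]

lemma hInner_conj_right (ρ : Fin N → ℂ) : hInner ρ (conjFun ρ) = (starRingEnd ℂ) (B ρ ρ) := by
  simp [hInner, conjFun, B, map_sum]

lemma hInner_conj_left (ρ : Fin N → ℂ) : hInner (conjFun ρ) ρ = B ρ ρ := by
  simp [hInner, conjFun, B]

lemma hInner_conj_conj (ρ : Fin N → ℂ) : hInner (conjFun ρ) (conjFun ρ) = ((nsq ρ : ℝ) : ℂ) := by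
  rw [← hInner_self_eq]
  simp [hInner, conjFun, mul_comm]

lemma hInner_sub_sub (a b : Fin N → ℂ) :
    hInner (a - b) (a - b) = hInner a a - hInner a b - hInner b a + hInner b b := by
  simp only [hInner, Pi.sub_apply, map_sub, ← Finset.sum_sub_distrib, ← Finset.sum_add_distrib]
  exact Finset.sum_congr rfl fun i _ => by ring

lemma hInner_smul_right (c : ℂ) (a b : Fin N → ℂ) : hInner a (c • b) = c * hInner a b := by
  simp [hInner, Finset.mul_sum]; exact Finset.sum_congr rfl fun i _ => by ring

lemma hInner_smul_left (c : ℂ) (a b : Fin N → ℂ) : hInner (c • a) b = (starRingEnd ℂ) c * hInner a b := by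
  simp [hInner, Finset.mul_sum]; exact Finset.sum_congr rfl fun i _ => by ring

/-- Toy model, Proposition 1 (kerP): away from the origin, `P_f(ρ) = 0` iff
`f(ξ(ρ)) = 0` or `ξ(ρ) = 1`. -/
theorem statement6 {N : ℕ} (f : ℝ → ℂ) (ρ : Fin N → ℂ) (hρ : ρ ≠ 0) :
    P f ρ = 0 ↔ f (xi ρ) = 0 ∨ xi ρ = 1 := by
  have hn : 0 < nsq ρ := nsq_pos ρ hρ
  have hnC : ((nsq ρ : ℝ) : ℂ) ≠ 0 := by exact_mod_cast hn.ne'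
  set s : ℝ := Real.sqrt (1 - xi ρ) with hs
  have hs0 : 0 ≤ s := Real.sqrt_nonneg _
  have h1s : (1 : ℂ) + (s : ℂ) ≠ 0 := by
    have : ((1 + s : ℝ) : ℂ) ≠ 0 := by
      exact_mod_cast (by linarith : (1 + s : ℝ) ≠ 0)
    simpa using this
  have hB : B ρ ρ = zeta ρ * ((nsq ρ : ℝ) : ℂ) := by
    rw [zeta, div_mul_cancel₀ _ hnC]
  constructor
  · intro hP
    by_cases hf : f (xi ρ) = 0
    · exact Or.inl hf
    · right
      have hv : ρ - (zeta ρ / (1 + (s : ℂ))) • conjFun ρ = 0 := by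
        rcases smul_eq_zero.mp hP with h | h
        · exact absurd h hf
        · exact h
      have heq : ρ = (zeta ρ / (1 + (s : ℂ))) • conjFun ρ := by
        rwa [sub_eq_zero] at hv
      have h1 := congrArg (hInner ρ) heq
      rw [hInner_smul_right, hInner_conj_right, hInner_self_eq, hB] at h1
      simp only [map_mul, Complex.conj_ofReal] at h1
      have hzx : zeta ρ * (starRingEnd ℂ) (zeta ρ) = ((xi ρ : ℝ) : ℂ) :=
        Complex.mul_conj (zeta ρ)
      have h2 : ((nsq ρ : ℝ) : ℂ) * (1 + (s : ℂ)) = ((xi ρ : ℝ) : ℂ) * ((nsq ρ : ℝ) : ℂ) := by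
        field_simp at h1
        linear_combination ((nsq ρ : ℝ) : ℂ) * h1 + ((nsq ρ : ℝ) : ℂ) * hzx
      have h3 : nsq ρ * (1 + s) = xi ρ * nsq ρ := by exact_mod_cast h2
      have h4 : 1 + s = xi ρ :=
        mul_left_cancel₀ hn.ne' (by linarith : nsq ρ * (1 + s) = nsq ρ * xi ρ)
      have hle : 1 - xi ρ ≤ 0 := by linarith
      have hsz : s = 0 := by rw [hs]; exact Real.sqrt_eq_zero'.mpr hle
      linarith
  · intro hor
    rcases hor with hf | hxi
    · simp [P, hf]
    · have hs0' : s = 0 := by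
        rw [hs, hxi]; simp
      have hzz : (starRingEnd ℂ) (zeta ρ) * zeta ρ = 1 := by
        rw [← Complex.normSq_eq_conj_mul_self]
        rw [show Complex.normSq (zeta ρ) = xi ρ from rfl, hxi]
        norm_num
      have hv : ρ - (zeta ρ / (1 + (s : ℂ))) • conjFun ρ = 0 := by
        rw [hs0']
        push_cast
        rw [add_zero, div_one]
        apply eq_zero_of_hInner
        rw [hInner_sub_sub]
        simp only [hInner_smul_right, hInner_smul_left]
        rw [hInner_conj_right, hInner_conj_left, hInner_conj_conj, hInner_self_eq, hB]
        simp only [map_mul, Complex.conj_ofReal]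
        linear_combination (-((nsq ρ : ℝ) : ℂ)) * hzz
      rw [P, hv, smul_zero]

end PureSpinorToy
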